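/- Let A be an N × L complex matrix with unit-norm columns and mutual coherence μ > 0, let M be a PSK constellation of unit-modulus symbols with coherence γ = max_{i≠m} Re(conj(b_i) b_m), and let y = Σ_{k=1}^K β_k a_{α_k} with distinct column indices α_k and β_k ∈ M. If K < min{(1+μ)/(2μ), (1+2μ-γ)/(2μ)}, then for every active index ℓ, the metric Re⟨y, β_ℓ a_{α_ℓ}⟩ strictly exceeds both Re⟨y, b a_{α_ℓ}⟩ for every b ∈ M with b ≠ β_ℓ, and Re⟨y, b a_j⟩ for every inactive column index j and every b ∈ M. -/

import Mathlib

open scoped ComplexInnerProductSpace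

theorem stmt_13 (N L K : ℕ) (hK : 1 ≤ K)
    (a : Fin L → EuclideanSpace ℂ (Fin N))
    (hnorm : ∀ i, ‖a i‖ = 1)
    (μ : ℝ) (hμpos : 0 < μ)
    (hμ : IsGreatest {x : ℝ | ∃ p q : Fin L, p ≠ q ∧ x = ‖⟪a p, a q⟫‖} μ)
    (M : Finset ℂ) (hM : ∀ b ∈ M, ‖b‖ = 1)
    (γ : ℝ)
    (hγ : IsGreatest
      {x : ℝ | ∃ b ∈ M, ∃ b' ∈ M, b ≠ b' ∧ x = ((starRingEnd ℂ) b * b').re} γ)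
    (α : Fin K → Fin L) (hα : Function.Injective α)
    (β : Fin K → ℂ) (hβ : ∀ k, β k ∈ M)
    (y : EuclideanSpace ℂ (Fin N))
    (hy : y = ∑ k : Fin K, β k • a (α k))
    (hKbound : (K : ℝ) < min ((1 + μ) / (2 * μ)) ((1 + 2 * μ - γ) / (2 * μ))) :
    ∀ ℓ : Fin K,
      (∀ b ∈ M, b ≠ β ℓ →
        (⟪b • a (α ℓ), y⟫).re < (⟪β ℓ • a (α ℓ), y⟫).re) ∧
      (∀ j : Fin L, (∀ k : Fin K, α k ≠ j) → ∀ b ∈ M,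
        (⟪b • a j, y⟫).re < (⟪β ℓ • a (α ℓ), y⟫).re) := by
  have hcoh : ∀ p q : Fin L, p ≠ q → ‖⟪a p, a q⟫‖ ≤ μ := fun p q hpq =>
    hμ.2 ⟨p, q, hpq, rfl⟩
  have hself : ∀ i, ⟪a i, a i⟫ = (1 : ℂ) := by
    intro i
    rw [inner_self_eq_norm_sq_to_K, hnorm]
    norm_num
  have hexp : ∀ (c : ℂ) (i : Fin L),
      ⟪c • a i, y⟫ = ∑ k : Fin K, (starRingEnd ℂ) c * (β k * ⟪a i, a (α k)⟫) := by
    intro c i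
    rw [hy, inner_smul_left, inner_sum, Finset.mul_sum]
    congr 1; ext k
    rw [inner_smul_right]
  have hterm : ∀ (c : ℂ), ‖c‖ = 1 → ∀ (i : Fin L) (k : Fin K), i ≠ α k →
      |((starRingEnd ℂ) c * (β k * ⟪a i, a (α k)⟫)).re| ≤ μ := by
    intro c hc i k hik
    calc |((starRingEnd ℂ) c * (β k * ⟪a i, a (α k)⟫)).re|
        ≤ ‖((starRingEnd ℂ) c * (β k * ⟪a i, a (α k)⟫))‖ :=
          Complex.abs_re_le_norm _
      _ = ‖c‖ * (‖β k‖ * ‖⟪a i, a (α k)⟫‖) := by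
          simp [map_mul]
      _ ≤ μ := by
          rw [hc, hM _ (hβ k), one_mul, one_mul]
          exact hcoh _ _ hik
  -- arithmetic facts
  have hK1 : 2 * μ * K < 1 + μ := by
    have := (lt_min_iff.mp hKbound).1
    rw [lt_div_iff₀ (by positivity)] at this
    linarith
  have hK2 : 2 * μ * K < 1 + 2 * μ - γ := by
    have := (lt_min_iff.mp hKbound).2
    rw [lt_div_iff₀ (by positivity)] at this
    linarith
  have hcard : ((Finset.univ.erase · : Fin K → _)) = (Finset.univ.erase ·) := rfl
  intro ℓ
  have hcardℓ : ((Finset.univ.erase ℓ).card : ℝ) = (K : ℝ) - 1 := by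
    rw [Finset.card_erase_of_mem (Finset.mem_univ ℓ), Finset.card_univ, Fintype.card_fin]
    have : (1:ℕ) ≤ K := hK
    push_cast [Nat.cast_sub this]
    ring
  -- lower bound on the match metric
  have hmatch : (1 : ℝ) - ((K : ℝ) - 1) * μ ≤ (⟪β ℓ • a (α ℓ), y⟫).re := by
    rw [hexp (β ℓ) (α ℓ), Complex.re_sum,
      ← Finset.add_sum_erase _ _ (Finset.mem_univ ℓ)]
    have h1 : ((starRingEnd ℂ) (β ℓ) * (β ℓ * ⟪a (α ℓ), a (α ℓ)⟫)).re = 1 := by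
      rw [hself, mul_one, Complex.conj_mul']
      have h := hM _ (hβ ℓ)
      simp [h]
    have h2 : -(((K : ℝ) - 1) * μ) ≤
        ∑ k ∈ Finset.univ.erase ℓ,
          ((starRingEnd ℂ) (β ℓ) * (β k * ⟪a (α ℓ), a (α k)⟫)).re := by
      have : ∀ k ∈ Finset.univ.erase ℓ,
          -μ ≤ ((starRingEnd ℂ) (β ℓ) * (β k * ⟪a (α ℓ), a (α k)⟫)).re := by
        intro k hk
        have hik : α ℓ ≠ α k := fun h =>
          (Finset.mem_erase.mp hk).1 ((hα h).symm)
        have := hterm (β ℓ) (hM _ (hβ ℓ)) (α ℓ) k hik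
        linarith [(abs_le.mp this).1]
      calc -(((K : ℝ) - 1) * μ) = ∑ _k ∈ Finset.univ.erase ℓ, (-μ) := by
            rw [Finset.sum_const, nsmul_eq_mul, hcardℓ]; ring
        _ ≤ _ := Finset.sum_le_sum this
    linarith
  have hsumbound : ∀ (c : ℂ), ‖c‖ = 1 → ∀ i : Fin L,
      (∀ k ∈ Finset.univ.erase ℓ, i ≠ α k) →
      ∑ k ∈ Finset.univ.erase ℓ,
          ((starRingEnd ℂ) c * (β k * ⟪a i, a (α k)⟫)).re ≤ ((K : ℝ) - 1) * μ := by
    intro c hc i hi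
    calc ∑ k ∈ Finset.univ.erase ℓ, ((starRingEnd ℂ) c * (β k * ⟪a i, a (α k)⟫)).re
        ≤ ∑ _k ∈ Finset.univ.erase ℓ, μ := by
          refine Finset.sum_le_sum fun k hk => ?_
          exact (abs_le.mp (hterm c hc i k (hi k hk))).2
      _ = ((K : ℝ) - 1) * μ := by
          rw [Finset.sum_const, nsmul_eq_mul, hcardℓ]
  constructor
  · intro b hb hbne
    have hγb : ((starRingEnd ℂ) b * β ℓ).re ≤ γ := hγ.2 ⟨b, hb, β ℓ, hβ ℓ, hbne, rfl⟩
    have hupper : (⟪b • a (α ℓ), y⟫).re ≤ γ + ((K : ℝ) - 1) * μ := by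
      rw [hexp b (α ℓ), Complex.re_sum,
        ← Finset.add_sum_erase _ _ (Finset.mem_univ ℓ)]
      have h1 : ((starRingEnd ℂ) b * (β ℓ * ⟪a (α ℓ), a (α ℓ)⟫)).re ≤ γ := by
        rw [hself, mul_one]; exact hγb
      have h2 := hsumbound b (hM _ hb) (α ℓ) (fun k hk h =>
        (Finset.mem_erase.mp hk).1 ((hα h).symm))
      linarith
    linarith
  · intro j hj b hb
    have hupper : (⟪b • a j, y⟫).re ≤ (K : ℝ) * μ := by
      rw [hexp b j, Complex.re_sum]
      calc ∑ k : Fin K, ((starRingEnd ℂ) b * (β k * ⟪a j, a (α k)⟫)).re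
          ≤ ∑ _k : Fin K, μ := by
            refine Finset.sum_le_sum fun k _ => ?_
            exact (abs_le.mp (hterm b (hM _ hb) j k (fun h => hj k h.symm))).2
        _ = (K : ℝ) * μ := by
            rw [Finset.sum_const, nsmul_eq_mul, Finset.card_univ, Fintype.card_fin]
    linarith
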